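/- Monotonicity underlying the optimal depth-to-width ratio for transformers (core of Theorem thm_986): for every real D > 0, the function p ↦ 3^p · ln(D/p) is strictly increasing on the set {p ∈ ℝ : 1 ≤ p and 4p ≤ D}. (Here D = p·d² encodes a fixed parameter budget and the constraint 4p ≤ D corresponds to width d ≥ 2, so within the depth-efficiency regime increasing the depth p strictly increases the separation-rank exponent 3^p·log d.) -/

import Mathlib

lemma one_lt_log_three : 1 < Real.log 3 := by
  rw [show (1:ℝ) = Real.log (Real.exp 1) by rw [Real.log_exp]]
  apply Real.log_lt_log (Real.exp_pos 1)
  calc Real.exp 1 < 2.7182818286 := Real.exp_one_lt_d9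
    _ < 3 := by norm_num

lemma one_lt_log_four : 1 < Real.log 4 := by
  rw [show (1:ℝ) = Real.log (Real.exp 1) by rw [Real.log_exp]]
  apply Real.log_lt_log (Real.exp_pos 1)
  calc Real.exp 1 < 2.7182818286 := Real.exp_one_lt_d9
    _ < 4 := by norm_num

/-- monotonicity underlying the optimal depth-to-width ratio for
transformers (core of Theorem thm_986). -/
theorem depth_width_monotone (D : ℝ) (hD : 0 < D) :
    StrictMonoOn (fun p : ℝ => (3 : ℝ) ^ p * Real.log (D / p))
      {p : ℝ | 1 ≤ p ∧ 4 * p ≤ D} := by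
  have hset : {p : ℝ | 1 ≤ p ∧ 4 * p ≤ D} = Set.Icc 1 (D / 4) := by
    ext p
    simp only [Set.mem_setOf_eq, Set.mem_Icc]
    constructor <;> rintro ⟨h1, h2⟩ <;> exact ⟨h1, by linarith⟩
  rw [hset]
  apply strictMonoOn_of_deriv_pos (convex_Icc _ _)
  · apply ContinuousOn.mul
    · exact (continuous_const.rpow continuous_id (fun _ => Or.inl (by norm_num))).continuousOn
    · apply Real.continuousOn_log.comp (continuousOn_const.div continuousOn_id ?_)
      · intro x hx
        have h1 : (1:ℝ) ≤ x := hx.1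
        have h0 : (0:ℝ) < x := by linarith
        have : D / x ≠ 0 := ne_of_gt (div_pos hD h0)
        simpa using this
      · intro x hx
        have h1 : (1:ℝ) ≤ x := hx.1
        simp only [id_eq]
        exact ne_of_gt (by linarith)
  · intro x hx
    rw [interior_Icc] at hx
    obtain ⟨hx1, hx2⟩ := hx
    have hx0 : 0 < x := by linarith
    have hDx : 0 < D / x := div_pos hD hx0
    have hdiv : HasDerivAt (fun p : ℝ => D / p) (-D / x ^ 2) x := by
      simpa [Pi.div_def] using (hasDerivAt_const x D).div (hasDerivAt_id x) hx0.ne'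
    have hlog : HasDerivAt (fun p : ℝ => Real.log (D / p)) ((-D / x ^ 2) / (D / x)) x :=
      hdiv.log hDx.ne'
    have hrpow : HasDerivAt (fun p : ℝ => (3:ℝ) ^ p) ((3:ℝ) ^ x * Real.log 3) x :=
      (Real.hasStrictDerivAt_const_rpow (by norm_num) x).hasDerivAt
    have hf : HasDerivAt (fun p : ℝ => (3 : ℝ) ^ p * Real.log (D / p))
        ((3:ℝ) ^ x * Real.log 3 * Real.log (D / x)
          + (3:ℝ) ^ x * ((-D / x ^ 2) / (D / x))) x := hrpow.mul hlog
    rw [hf.deriv]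
    have hsimp : (-D / x ^ 2) / (D / x) = -(1 / x) := by
      field_simp
    rw [hsimp]
    have h3x : (0:ℝ) < (3:ℝ) ^ x := Real.rpow_pos_of_pos (by norm_num) x
    have hl3 := one_lt_log_three
    have hl4 : 1 < Real.log (D / x) := by
      apply lt_of_lt_of_le one_lt_log_four
      apply Real.log_le_log (by norm_num)
      rw [le_div_iff₀ hx0]
      linarith
    have hinv : 1 / x < 1 := by
      rw [div_lt_one hx0]; exact hx1
    have hinvpos : 0 < 1 / x := by positivity
    have key : 1 / x < Real.log 3 * Real.log (D / x) := by nlinarith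
    nlinarith [mul_lt_mul_of_pos_left key h3x]
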